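/- Let n ≥ 2 and c, d ∈ ℂ^×. Then for every x = (x_2,…,x_{2n−1}) ∈ (ℂ^×)^{2n−2} for which all denominators occurring are nonzero, e_0^c(e_n^{cd}(e_0^d(x))) = e_n^d(e_0^{cd}(e_n^c(x))); that is, the Verma relation e_0^{c} e_n^{cd} e_0^{d} = e_n^{d} e_0^{cd} e_n^{c} holds between the rational maps e_0 and e_n. -/

import Mathlib

noncomputable section

/-- `Sf n x k = ∑_{j=2}^{k} x_j / x_{n+j-1}` (so `Sf n x 1 = 0`, `S(x) = Sf n x n`). -/
def Sf (n : ℕ) (x : ℕ → ℂ) (k : ℕ) : ℂ :=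
  ∑ j ∈ Finset.Icc 2 k, x j / x (n + j - 1)

/-- `Tf n x k = ∑_{j=k+1}^{n} x_j / x_{n+j-1}` (so `Tf n x n = 0`). -/
def Tf (n : ℕ) (x : ℕ → ℂ) (k : ℕ) : ℂ :=
  ∑ j ∈ Finset.Icc (k + 1) n, x j / x (n + j - 1)

/-- The rational map `e_0^c`. -/
def e0M (n : ℕ) (c : ℂ) (x : ℕ → ℂ) (k : ℕ) : ℂ :=
  if k ≤ n - 1 then x k * Sf n x n / (c * Sf n x k + Tf n x k)
  else if k ≤ n + 1 then x k / c
  else x k * (c * Sf n x (k - n) + Tf n x (k - n)) / (c * Sf n x n)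

/-- The rational map `e_n^c`: multiply the coordinate `x_n` by `c`. -/
def enM (n : ℕ) (c : ℂ) (x : ℕ → ℂ) (k : ℕ) : ℂ :=
  if k = n then c * x k else x k

/-- All coordinates in range are nonzero. -/
def Nz (n : ℕ) (z : ℕ → ℂ) : Prop := ∀ k, 2 ≤ k → k ≤ 2 * n - 1 → z k ≠ 0

/-- Denominators appearing in `e_0^c` at the point `z` are nonzero. -/
def Dom0 (n : ℕ) (c : ℂ) (z : ℕ → ℂ) : Prop :=
  Sf n z n ≠ 0 ∧ ∀ k, 2 ≤ k → k ≤ n - 1 → c * Sf n z k + Tf n z k ≠ 0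

lemma Sf_one (n : ℕ) (x : ℕ → ℂ) : Sf n x 1 = 0 := by
  simp [Sf]

lemma Sf_succ (n : ℕ) (x : ℕ → ℂ) (k : ℕ) (hk : 1 ≤ k) :
    Sf n x (k + 1) = Sf n x k + x (k + 1) / x (n + k) := by
  unfold Sf
  rw [Finset.sum_Icc_succ_top (by omega), show n + (k + 1) - 1 = n + k from by omega]

lemma Tf_top (n : ℕ) (x : ℕ → ℂ) : Tf n x n = 0 := by
  unfold Tf
  rw [Finset.Icc_eq_empty (by omega), Finset.sum_empty]

lemma SfTf (n : ℕ) (x : ℕ → ℂ) (k : ℕ) (h1 : 1 ≤ k) (h2 : k ≤ n) :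
    Tf n x k = Sf n x n - Sf n x k := by
  have h : Sf n x k + Tf n x k = Sf n x n := by
    unfold Sf Tf
    rw [show (2:ℕ) = 1 + 1 from rfl, Finset.Icc_add_one_left_eq_Ioc, Finset.Icc_add_one_left_eq_Ioc, Finset.Icc_add_one_left_eq_Ioc]
    exact Finset.sum_Ioc_consecutive _ h1 h2
  exact eq_sub_of_add_eq' h

lemma enM_apply_ne (n : ℕ) (c : ℂ) (x : ℕ → ℂ) (k : ℕ) (h : k ≠ n) :
    enM n c x k = x k := if_neg h

lemma enM_self (n : ℕ) (c : ℂ) (x : ℕ → ℂ) : enM n c x n = c * x n := if_pos rfl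

lemma enM_Sf (n : ℕ) (c : ℂ) (x : ℕ → ℂ) (k : ℕ) (hk : k ≤ n - 1) (hn : 1 ≤ n) :
    Sf n (enM n c x) k = Sf n x k := by
  unfold Sf
  refine Finset.sum_congr rfl fun j hj => ?_
  simp only [Finset.mem_Icc] at hj
  rw [enM_apply_ne _ _ _ _ (by omega), enM_apply_ne _ _ _ _ (by omega)]

lemma enM_Sf_top (n : ℕ) (c : ℂ) (x : ℕ → ℂ) (hn : 2 ≤ n) :
    Sf n (enM n c x) n = Sf n x (n - 1) + c * x n / x (2 * n - 1) := by
  have h := Sf_succ n (enM n c x) (n - 1) (by omega)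
  simp only [show n - 1 + 1 = n from by omega, show n + (n - 1) = 2 * n - 1 from by omega] at h
  rw [h, enM_Sf n c x (n - 1) le_rfl (by omega), enM_self,
      enM_apply_ne n c x (2 * n - 1) (by omega)]

lemma e0M_low (n : ℕ) (c : ℂ) (x : ℕ → ℂ) (k : ℕ) (hn : 2 ≤ n) (hc : c ≠ 0)
    (hk2 : 2 ≤ k) (hkn : k ≤ n) (hS : Sf n x n ≠ 0) :
    e0M n c x k = x k * Sf n x n / (c * Sf n x k + Tf n x k) := by
  unfold e0M
  by_cases h : k ≤ n - 1
  · rw [if_pos h]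
  · have hk : k = n := by omega
    subst hk
    rw [if_neg h, if_pos (by omega), Tf_top, add_zero]
    field_simp

lemma e0M_mid (n : ℕ) (c : ℂ) (x : ℕ → ℂ) (hn : 2 ≤ n) :
    e0M n c x n = x n / c := by
  unfold e0M
  rw [if_neg (by omega), if_pos (by omega)]

lemma e0M_high (n : ℕ) (c : ℂ) (x : ℕ → ℂ) (l : ℕ) (hn : 2 ≤ n) (hc : c ≠ 0)
    (hl1 : 1 ≤ l) (hln : l ≤ n - 1) (hS : Sf n x n ≠ 0) :
    e0M n c x (n + l) = x (n + l) * (c * Sf n x l + Tf n x l) / (c * Sf n x n) := by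
  unfold e0M
  rw [if_neg (by omega)]
  by_cases h1 : l = 1
  · subst h1
    rw [if_pos (by omega), SfTf n x 1 le_rfl (by omega)]
    simp only [Sf_one]
    field_simp
    ring
  · rw [if_neg (by omega), show n + l - n = l from by omega]

lemma e0M_Sf (n : ℕ) (c : ℂ) (x : ℕ → ℂ) (hn : 2 ≤ n) (hc : c ≠ 0)
    (hS : Sf n x n ≠ 0)
    (hD : ∀ j, 1 ≤ j → j ≤ n → c * Sf n x j + Tf n x j ≠ 0)
    (hx : Nz n x) :
    ∀ k, 1 ≤ k → k ≤ n →
      Sf n (e0M n c x) k = c * Sf n x n * Sf n x k / (c * Sf n x k + Tf n x k) := by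
  intro k
  induction k with
  | zero => intro h _; omega
  | succ m ih =>
    intro hk1 hkn
    by_cases hm0 : m = 0
    · subst hm0
      rw [Sf_one, Sf_one, mul_zero, zero_div]
    · have hm1 : 1 ≤ m := by omega
      have ihm := ih hm1 (by omega)
      have hxnm : x (n + m) ≠ 0 := hx (n + m) (by omega) (by omega)
      have hDm : c * Sf n x m + (Sf n x n - Sf n x m) ≠ 0 := by
        have := hD m hm1 (by omega); rwa [SfTf n x m hm1 (by omega)] at this
      have hDm1 : c * Sf n x (m + 1) + (Sf n x n - Sf n x (m + 1)) ≠ 0 := by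
        have := hD (m + 1) (by omega) hkn; rwa [SfTf n x (m + 1) (by omega) hkn] at this
      have hxm1 : x (m + 1) = (Sf n x (m + 1) - Sf n x m) * x (n + m) := by
        rw [Sf_succ n x m hm1]; field_simp; ring
      rw [Sf_succ n (e0M n c x) m hm1, ihm,
          e0M_low n c x (m + 1) hn hc (by omega) hkn hS,
          e0M_high n c x m hn hc hm1 (by omega) hS,
          SfTf n x m hm1 (by omega), SfTf n x (m + 1) (by omega) hkn, hxm1]
      field_simp
      ring

set_option maxHeartbeats 1000000 in
/-- the Verma relation `e_0^c e_n^{cd} e_0^d = e_n^d e_0^{cd} e_n^c`. -/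
theorem stmt11 (n : ℕ) (hn : 2 ≤ n) (c d : ℂ) (hc : c ≠ 0) (hd : d ≠ 0)
    (x : ℕ → ℂ) (hx : Nz n x)
    (h1 : Dom0 n d x) (h2 : Nz n (e0M n d x))
    (h3 : Nz n (enM n (c * d) (e0M n d x)))
    (h4 : Dom0 n c (enM n (c * d) (e0M n d x)))
    (h5 : Nz n (enM n c x)) (h6 : Dom0 n (c * d) (enM n c x))
    (h7 : Nz n (e0M n (c * d) (enM n c x))) :
    ∀ k, 2 ≤ k → k ≤ 2 * n - 1 →
      e0M n c (enM n (c * d) (e0M n d x)) k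
        = enM n d (e0M n (c * d) (enM n c x)) k := by
  have hcd : c * d ≠ 0 := mul_ne_zero hc hd
  have hA : Sf n x n ≠ 0 := h1.1
  have hD : ∀ j, 1 ≤ j → j ≤ n → d * Sf n x j + Tf n x j ≠ 0 := by
    intro j hj1 hjn
    rcases eq_or_lt_of_le hj1 with h | h
    · rw [← h, SfTf n x 1 le_rfl (by omega)]
      simp only [Sf_one]
      simpa using hA
    rcases eq_or_lt_of_le hjn with h' | h'
    · rw [h', Tf_top]
      simpa using mul_ne_zero hd hA
    · exact h1.2 j (by omega) (by omega)
  have hE : ∀ j, 1 ≤ j → j ≤ n → d * Sf n x j + (Sf n x n - Sf n x j) ≠ 0 := by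
    intro j hj1 hjn
    have := hD j hj1 hjn
    rwa [SfTf n x j hj1 hjn] at this
  have hx2 : x (2 * n - 1) ≠ 0 := hx _ (by omega) (by omega)
  have hSy : Sf n x n = Sf n x (n - 1) + x n / x (2 * n - 1) := by
    have h := Sf_succ n x (n - 1) (by omega)
    simpa [show n - 1 + 1 = n from by omega, show n + (n - 1) = 2 * n - 1 from by omega] using h
  have hy' : x n = (Sf n x n - Sf n x (n - 1)) * x (2 * n - 1) := by
    rw [hSy]; field_simp; ring
  -- facts about z = e0M n d x
  have hzS : ∀ j, 1 ≤ j → j ≤ n → Sf n (e0M n d x) j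
      = d * Sf n x n * Sf n x j / (d * Sf n x j + (Sf n x n - Sf n x j)) := by
    intro j hj1 hjn
    rw [e0M_Sf n d x hn hd hA hD hx j hj1 hjn, SfTf n x j hj1 hjn]
  have hzk : ∀ j, 2 ≤ j → j ≤ n → e0M n d x j
      = x j * Sf n x n / (d * Sf n x j + (Sf n x n - Sf n x j)) := by
    intro j hj2 hjn
    rw [e0M_low n d x j hn hd hj2 hjn hA, SfTf n x j (by omega) hjn]
  have hzn : e0M n d x n = x n / d := e0M_mid n d x hn
  have hzl : ∀ l, 1 ≤ l → l ≤ n - 1 → e0M n d x (n + l)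
      = x (n + l) * (d * Sf n x l + (Sf n x n - Sf n x l)) / (d * Sf n x n) := by
    intro l hl1 hln
    rw [e0M_high n d x l hn hd hl1 hln hA, SfTf n x l hl1 (by omega)]
  have hz2 : e0M n d x (2 * n - 1)
      = x (2 * n - 1) * (d * Sf n x (n - 1) + (Sf n x n - Sf n x (n - 1))) / (d * Sf n x n) := by
    rw [show 2 * n - 1 = n + (n - 1) from by omega]
    exact hzl (n - 1) (by omega) le_rfl
  -- facts about w = enM n (c*d) z
  have hwSf : ∀ j, j ≤ n - 1 → Sf n (enM n (c * d) (e0M n d x)) j = Sf n (e0M n d x) j :=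
    fun j hj => enM_Sf n (c * d) _ j hj (by omega)
  have hwS : Sf n (enM n (c * d) (e0M n d x)) n
      = d * Sf n x n * (Sf n x (n - 1) + c * (Sf n x n - Sf n x (n - 1)))
        / (d * Sf n x (n - 1) + (Sf n x n - Sf n x (n - 1))) := by
    rw [enM_Sf_top n (c * d) _ hn, hzS (n - 1) (by omega) (by omega), hzn, hz2, hy']
    have hE1 := hE (n - 1) (by omega) (by omega)
    field_simp
  -- facts about z' = enM n c x
  have hz'S : Sf n (enM n c x) n
      = Sf n x (n - 1) + c * (Sf n x n - Sf n x (n - 1)) := by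
    rw [enM_Sf_top n c x hn, mul_div_assoc, hy', mul_div_cancel_right₀ _ hx2]
  have hσ : Sf n x (n - 1) + c * (Sf n x n - Sf n x (n - 1)) ≠ 0 := by
    rw [← hz'S]; exact h6.1
  have hz'Sf : ∀ j, j ≤ n - 1 → Sf n (enM n c x) j = Sf n x j :=
    fun j hj => enM_Sf n c x j hj (by omega)
  have hG : ∀ j, 1 ≤ j → j ≤ n - 1 →
      (c * d) * Sf n x j
        + ((Sf n x (n - 1) + c * (Sf n x n - Sf n x (n - 1))) - Sf n x j) ≠ 0 := by
    intro j hj1 hjn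
    rcases eq_or_lt_of_le hj1 with h | h
    · rw [← h]
      simp only [Sf_one]
      simpa using hσ
    · have h6j := h6.2 j (by omega) hjn
      rwa [SfTf n (enM n c x) j (by omega) (by omega), hz'S, hz'Sf j hjn] at h6j
  -- facts about w' = e0M n (c*d) z'
  have hσ' : Sf n (enM n c x) n ≠ 0 := h6.1
  have hw'k : ∀ j, 2 ≤ j → j ≤ n - 1 → e0M n (c * d) (enM n c x) j
      = x j * (Sf n x (n - 1) + c * (Sf n x n - Sf n x (n - 1)))
        / ((c * d) * Sf n x j
            + ((Sf n x (n - 1) + c * (Sf n x n - Sf n x (n - 1))) - Sf n x j)) := by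
    intro j hj2 hjn
    rw [e0M_low n (c * d) (enM n c x) j hn hcd hj2 (by omega) hσ',
        SfTf n (enM n c x) j (by omega) (by omega), hz'S, hz'Sf j hjn,
        enM_apply_ne n c x j (by omega)]
  have hw'l : ∀ l, 1 ≤ l → l ≤ n - 1 → e0M n (c * d) (enM n c x) (n + l)
      = x (n + l) * ((c * d) * Sf n x l
            + ((Sf n x (n - 1) + c * (Sf n x n - Sf n x (n - 1))) - Sf n x l))
        / ((c * d) * (Sf n x (n - 1) + c * (Sf n x n - Sf n x (n - 1)))) := by
    intro l hl1 hln
    rw [e0M_high n (c * d) (enM n c x) l hn hcd hl1 hln hσ',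
        SfTf n (enM n c x) l hl1 (by omega), hz'S, hz'Sf l hln,
        enM_apply_ne n c x (n + l) (by omega)]
  have hw'n : e0M n (c * d) (enM n c x) n = c * x n / (c * d) := by
    rw [e0M_mid n (c * d) _ hn, enM_self]
  -- the key denominator computation for w
  have hden : ∀ j, 1 ≤ j → j ≤ n - 1 →
      c * Sf n (enM n (c * d) (e0M n d x)) j
        + (Sf n (enM n (c * d) (e0M n d x)) n - Sf n (enM n (c * d) (e0M n d x)) j)
      = d * Sf n x n * Sf n x n
          * ((c * d) * Sf n x j
              + ((Sf n x (n - 1) + c * (Sf n x n - Sf n x (n - 1))) - Sf n x j))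
        / ((d * Sf n x j + (Sf n x n - Sf n x j))
            * (d * Sf n x (n - 1) + (Sf n x n - Sf n x (n - 1)))) := by
    intro j hj1 hjn
    rw [hwSf j hjn, hwS, hzS j hj1 (by omega)]
    have hEj := hE j hj1 (by omega)
    have hE1 := hE (n - 1) (by omega) (by omega)
    field_simp
    ring
  have hSw0 : Sf n (enM n (c * d) (e0M n d x)) n ≠ 0 := h4.1
  -- main case split
  intro k hk2 hk
  rcases lt_or_ge k n with hkn | hkn
  · -- 2 ≤ k ≤ n - 1
    have hk1 : k ≤ n - 1 := by omega
    rw [e0M_low n c (enM n (c * d) (e0M n d x)) k hn hc hk2 (by omega) hSw0,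
        SfTf n (enM n (c * d) (e0M n d x)) k (by omega) (by omega),
        hden k (by omega) hk1,
        enM_apply_ne n (c * d) (e0M n d x) k (by omega),
        hzk k hk2 (by omega), hwS,
        enM_apply_ne n d (e0M n (c * d) (enM n c x)) k (by omega),
        hw'k k hk2 hk1]
    have hEk := hE k (by omega) (by omega)
    have hE1 := hE (n - 1) (by omega) (by omega)
    have hGk := hG k (by omega) hk1
    field_simp
  · rcases eq_or_lt_of_le hkn with h | h
    · -- k = n
      rw [← h, e0M_mid n c _ hn, enM_self, hzn, enM_self, hw'n]
      field_simp
    · -- k = n + l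
      obtain ⟨l, hl1, hln, rfl⟩ : ∃ l, 1 ≤ l ∧ l ≤ n - 1 ∧ k = n + l :=
        ⟨k - n, by omega, by omega, by omega⟩
      have hcSw : c * Sf n (enM n (c * d) (e0M n d x)) n
          = c * (d * Sf n x n * (Sf n x (n - 1) + c * (Sf n x n - Sf n x (n - 1))))
            / (d * Sf n x (n - 1) + (Sf n x n - Sf n x (n - 1))) := by
        rw [hwS]; ring
      rw [e0M_high n c (enM n (c * d) (e0M n d x)) l hn hc hl1 hln hSw0,
          SfTf n (enM n (c * d) (e0M n d x)) l hl1 (by omega),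
          hden l hl1 hln,
          enM_apply_ne n (c * d) (e0M n d x) (n + l) (by omega),
          hzl l hl1 hln, hcSw,
          enM_apply_ne n d (e0M n (c * d) (enM n c x)) (n + l) (by omega),
          hw'l l hl1 hln]
      have hEl := hE l hl1 (by omega)
      have hE1 := hE (n - 1) (by omega) (by omega)
      rw [div_mul_div_comm, div_div_div_eq, div_eq_div_iff
        (mul_ne_zero (mul_ne_zero (mul_ne_zero hd hA) (mul_ne_zero hEl hE1))
          (mul_ne_zero hc (mul_ne_zero (mul_ne_zero hd hA) hσ)))
        (mul_ne_zero hcd hσ)]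
      ring
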